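/- Let f : [0,1] → ℝ satisfy the Hölder condition |f(x) − f(y)| ≤ c|x − y|^α for all x, y ∈ [0,1], where c > 0 and 0 < α ≤ 1. Let M ≥ 1 be an integer and let f̄ be the histogram approximation of f with M equal bins (the piecewise constant function whose value on each bin ((k−1)/M, k/M] is the average of f over that bin). Then ∫₀¹ (f(x) − f̄(x))² dx ≤ c² M^{−2α}. -/

import Mathlib

open MeasureTheory Set

/-- The histogram approximation of `f` on `[0,1]` with `M` equal bins: the piecewise
constant function whose value on the bin `((k−1)/M, k/M]` (here indexed by
`k - 1 ∈ {0, …, M−1}`) is the average of `f` over that bin. -/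
noncomputable def histApprox (f : ℝ → ℝ) (M : ℕ) (x : ℝ) : ℝ :=
  ∑ k ∈ Finset.range M,
    Set.indicator (Set.Ioc ((k : ℝ) / M) (((k : ℝ) + 1) / M))
      (fun _ => (M : ℝ) * ∫ u in Set.Ioc ((k : ℝ) / M) (((k : ℝ) + 1) / M), f u) x

/-- Hölder functions are continuous on `[0,1]`. -/
lemma holder_continuousOn (f : ℝ → ℝ) (c α : ℝ) (hc : 0 < c) (hα : 0 < α)
    (hHolder : ∀ x ∈ Set.Icc (0 : ℝ) 1, ∀ y ∈ Set.Icc (0 : ℝ) 1,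
      |f x - f y| ≤ c * |x - y| ^ α) :
    ContinuousOn f (Set.Icc 0 1) := by
  intro x hx
  rw [Metric.continuousWithinAt_iff]
  intro ε hε
  refine ⟨(ε / (2 * c)) ^ (1 / α), Real.rpow_pos_of_pos (by positivity) _, fun y hy hd => ?_⟩
  have h1 : |f y - f x| ≤ c * |y - x| ^ α := hHolder y hy x hx
  have h2 : |y - x| ^ α < ((ε / (2 * c)) ^ (1 / α)) ^ α := by
    apply Real.rpow_lt_rpow (abs_nonneg _) _ hα
    simpa [Real.dist_eq] using hd
  have h3 : ((ε / (2 * c)) ^ (1 / α) : ℝ) ^ α = ε / (2 * c) := by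
    rw [← Real.rpow_mul (by positivity), one_div_mul_cancel hα.ne', Real.rpow_one]
  rw [h3] at h2
  have : c * |y - x| ^ α < c * (ε / (2 * c)) := by
    exact (mul_lt_mul_iff_right₀ hc).mpr h2
  have hlt : c * (ε / (2 * c)) < ε := by
    rw [mul_div_assoc']
    rw [div_lt_iff₀ (by positivity)]
    nlinarith
  calc dist (f y) (f x) = |f y - f x| := Real.dist_eq _ _
    _ ≤ c * |y - x| ^ α := h1
    _ < ε := lt_trans this hlt

/-- Pointwise bound: for `x ∈ (0,1]`, `|f x − f̄ x| ≤ c M^{−α}`. -/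
lemma histApprox_pointwise (f : ℝ → ℝ) (c α : ℝ) (hc : 0 < c)
    (hα : 0 < α)
    (hHolder : ∀ x ∈ Set.Icc (0 : ℝ) 1, ∀ y ∈ Set.Icc (0 : ℝ) 1,
      |f x - f y| ≤ c * |x - y| ^ α)
    (M : ℕ) (hM : 1 ≤ M) {x : ℝ} (hx : x ∈ Set.Ioc (0 : ℝ) 1) :
    |f x - histApprox f M x| ≤ c * (M : ℝ) ^ (-α) := by
  have hM0 : (0 : ℝ) < M := by exact_mod_cast hM
  obtain ⟨hx0, hx1⟩ := hx
  have hxI : x ∈ Set.Icc (0 : ℝ) 1 := ⟨hx0.le, hx1⟩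
  -- find the bin containing x
  have hxM0 : 0 < x * M := by positivity
  have hceil1 : 1 ≤ ⌈x * M⌉₊ := Nat.one_le_iff_ne_zero.mpr (by
    simp [Nat.ceil_eq_zero, not_le, hxM0])
  set k : ℕ := ⌈x * M⌉₊ - 1 with hk
  have hk1 : (k : ℕ) + 1 = ⌈x * M⌉₊ := by omega
  have hkR : ((k : ℝ) + 1) = (⌈x * M⌉₊ : ℝ) := by exact_mod_cast congrArg (Nat.cast (R := ℝ)) hk1
  have hmem : x ∈ Set.Ioc ((k : ℝ) / M) (((k : ℝ) + 1) / M) := by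
    constructor
    · rw [div_lt_iff₀ hM0]
      have : (⌈x * M⌉₊ : ℝ) < x * M + 1 := Nat.ceil_lt_add_one (le_of_lt hxM0)
      have hkk : (k : ℝ) = (⌈x * M⌉₊ : ℝ) - 1 := by
        rw [← hkR]; ring
      rw [hkk]; linarith
    · rw [le_div_iff₀ hM0, hkR]
      exact Nat.le_ceil _
  have hkM : k ∈ Finset.range M := by
    rw [Finset.mem_range]
    have : ⌈x * M⌉₊ ≤ M := by
      apply Nat.ceil_le.mpr
      calc x * M ≤ 1 * M := by nlinarith
        _ = (M : ℝ) := one_mul _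
    omega
  -- histApprox at x equals the bin average
  have hhist : histApprox f M x
      = (M : ℝ) * ∫ u in Set.Ioc ((k : ℝ) / M) (((k : ℝ) + 1) / M), f u := by
    rw [histApprox]
    rw [Finset.sum_eq_single k]
    · rw [Set.indicator_of_mem hmem]
    · intro j hj hjk
      apply Set.indicator_of_notMem
      rcases Nat.lt_or_ge j k with h | h
      · intro hmem'
        have h1 : ((j : ℝ) + 1) / M ≤ (k : ℝ) / M := by
          gcongr
          · have : (j : ℕ) + 1 ≤ k := h
            exact_mod_cast this
        exact absurd (hmem'.2) (not_le.mpr (lt_of_le_of_lt h1 hmem.1))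
      · have hkj : k < j := lt_of_le_of_ne h (Ne.symm hjk)
        intro hmem'
        have h1 : ((k : ℝ) + 1) / M ≤ (j : ℝ) / M := by
          gcongr
          · have : (k : ℕ) + 1 ≤ j := hkj
            exact_mod_cast this
        exact absurd hmem'.1 (not_lt.mpr (le_trans hmem.2 h1))
    · intro h; exact absurd hkM h
  -- abbreviations
  set a : ℝ := (k : ℝ) / M with ha
  set b : ℝ := ((k : ℝ) + 1) / M with hb
  have hba : b - a = 1 / M := by rw [ha, hb]; ring
  have hsub : Set.Ioc a b ⊆ Set.Icc (0 : ℝ) 1 := by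
    intro u hu
    have ha0 : (0 : ℝ) ≤ a := by positivity
    have hb1 : b ≤ 1 := by
      rw [hb, div_le_one hM0]
      have : (k : ℕ) + 1 ≤ M := Finset.mem_range.mp hkM
      exact_mod_cast this
    exact ⟨le_of_lt (lt_of_le_of_lt ha0 hu.1), le_trans hu.2 hb1⟩
  have hcont : ContinuousOn f (Set.Icc 0 1) := holder_continuousOn f c α hc hα hHolder
  have hint : IntegrableOn f (Set.Ioc a b) :=
    (hcont.integrableOn_Icc).mono_set hsub
  have hvol : (volume (Set.Ioc a b)).toReal = 1 / M := by
    rw [Real.volume_Ioc, ENNReal.toReal_ofReal (by rw [hba]; positivity)]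
    exact hba
  -- rewrite the difference as M times an integral
  have hdiff : f x - histApprox f M x
      = (M : ℝ) * ∫ u in Set.Ioc a b, (f x - f u) := by
    rw [hhist, integral_sub (integrableOn_const (C := f x) (μ := volume) (s := Set.Ioc a b) (by
      rw [Real.volume_Ioc]; exact ENNReal.ofReal_ne_top)) hint]
    rw [setIntegral_const, measureReal_def, hvol]
    rw [smul_eq_mul, mul_sub, ← mul_assoc, mul_one_div_cancel hM0.ne', one_mul]
  -- bound the integrand
  have hbound : ∀ u ∈ Set.Ioc a b, ‖f x - f u‖ ≤ c * (1 / M) ^ α := by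
    intro u hu
    have hxu : |x - u| ≤ 1 / M := by
      rw [abs_le]
      have h1 := hmem.1
      have h2 := hmem.2
      have h3 := hu.1
      have h4 := hu.2
      constructor <;> [linarith [hba]; linarith [hba]]
    calc ‖f x - f u‖ = |f x - f u| := rfl
      _ ≤ c * |x - u| ^ α := hHolder x hxI u (hsub hu)
      _ ≤ c * (1 / M) ^ α := by
          apply mul_le_mul_of_nonneg_left _ hc.le
          exact Real.rpow_le_rpow (abs_nonneg _) hxu hα.le
  have hnorm : ‖∫ u in Set.Ioc a b, (f x - f u)‖ ≤ (c * (1 / M) ^ α) * (1 / M) := by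
    have := norm_setIntegral_le_of_norm_le_const (μ := volume)
      (s := Set.Ioc a b) (f := fun u => f x - f u)
      (by rw [Real.volume_Ioc]; exact ENNReal.ofReal_lt_top) hbound
    rw [measureReal_def] at this
    rwa [hvol] at this
  rw [hdiff, abs_mul, abs_of_nonneg hM0.le]
  calc (M : ℝ) * |∫ u in Set.Ioc a b, (f x - f u)|
      ≤ (M : ℝ) * ((c * (1 / M) ^ α) * (1 / M)) := by
        exact mul_le_mul_of_nonneg_left hnorm hM0.le
    _ = c * (1 / M) ^ α := by field_simp
    _ = c * (M : ℝ) ^ (-α) := by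
        rw [one_div, Real.inv_rpow hM0.le, ← Real.rpow_neg hM0.le]

theorem histApprox_bias_bound (f : ℝ → ℝ) (c α : ℝ) (hc : 0 < c)
    (hα : 0 < α) (hα1 : α ≤ 1)
    (hHolder : ∀ x ∈ Set.Icc (0 : ℝ) 1, ∀ y ∈ Set.Icc (0 : ℝ) 1,
      |f x - f y| ≤ c * |x - y| ^ α)
    (M : ℕ) (hM : 1 ≤ M) :
    (∫ x in Set.Ioc (0 : ℝ) 1, (f x - histApprox f M x)^2)
      ≤ c^2 * (M : ℝ) ^ (-(2 * α)) := by
  have hM0 : (0 : ℝ) < M := by exact_mod_cast hM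
  set C : ℝ := c ^ 2 * (M : ℝ) ^ (-(2 * α)) with hC
  have hptsq : ∀ x ∈ Set.Ioc (0 : ℝ) 1, ‖(f x - histApprox f M x) ^ 2‖ ≤ C := by
    intro x hx
    have h := histApprox_pointwise f c α hc hα hHolder M hM hx
    have h0 : (0 : ℝ) ≤ c * (M : ℝ) ^ (-α) := by positivity
    have hsq : (f x - histApprox f M x) ^ 2 ≤ (c * (M : ℝ) ^ (-α)) ^ 2 := by
      rw [← sq_abs]
      exact pow_le_pow_left₀ (abs_nonneg _) h 2
    have heq : (c * (M : ℝ) ^ (-α)) ^ 2 = C := by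
      rw [hC, mul_pow]
      congr 1
      rw [← Real.rpow_natCast ((M : ℝ) ^ (-α)) 2, ← Real.rpow_mul hM0.le]
      ring_nf
    rw [Real.norm_eq_abs, abs_of_nonneg (sq_nonneg _)]
    rw [heq] at hsq
    exact hsq
  have hle := norm_setIntegral_le_of_norm_le_const (μ := volume)
    (s := Set.Ioc (0 : ℝ) 1) (f := fun x => (f x - histApprox f M x) ^ 2)
    (by rw [Real.volume_Ioc]; exact ENNReal.ofReal_lt_top) hptsq
  rw [measureReal_def] at hle
  have hvol : (volume (Set.Ioc (0 : ℝ) 1)).toReal = 1 := by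
    rw [Real.volume_Ioc]; norm_num
  rw [hvol, mul_one] at hle
  calc (∫ x in Set.Ioc (0 : ℝ) 1, (f x - histApprox f M x) ^ 2)
      ≤ ‖∫ x in Set.Ioc (0 : ℝ) 1, (f x - histApprox f M x) ^ 2‖ := le_abs_self _
    _ ≤ C := hle
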